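/- In the complete bipartite graph K_{n,m} (n, m ≥ 1) with parts N and M of sizes n and m, a nonempty set S of vertices is a strong defensive alliance with connected induced subgraph if and only if |S ∩ N| ≥ ⌈n/2⌉ and |S ∩ M| ≥ ⌈m/2⌉. Consequently, for every k, a_k(K_{n,m}) = Σ_{i=⌈m/2⌉}^{k−⌈n/2⌉} C(m,i)·C(n,k−i), and a(K_{n,m}; x) = (Σ_{i=⌈n/2⌉}^{n} C(n,i) x^i)·(Σ_{j=⌈m/2⌉}^{m} C(m,j) x^j). -/

import Mathlib

open SimpleGraph Polynomial Finset

/-- `δ_S(v)`: the number of neighbors of `v` lying in the set `S`. -/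
noncomputable def degIn {V : Type*} (G : SimpleGraph V) (S : Finset V) (v : V) : ℕ :=
  ((S : Set V) ∩ G.neighborSet v).ncard

/-- `δ(v)`: the degree of `v` in `G`. -/
noncomputable def degOf {V : Type*} (G : SimpleGraph V) (v : V) : ℕ :=
  (G.neighborSet v).ncard

/-- `S` is a strong defensive alliance in `G`: `S` is nonempty and every `v ∈ S`
satisfies `2·δ_S(v) ≥ δ(v)`. -/
def IsStrongAlliance {V : Type*} (G : SimpleGraph V) (S : Finset V) : Prop :=
  S.Nonempty ∧ ∀ v ∈ S, degOf G v ≤ 2 * degIn G S v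

/-- The alliances counted by the strong alliance polynomial: strong defensive alliances
whose induced subgraph is connected. -/
def IsCountedAlliance {V : Type*} (G : SimpleGraph V) (S : Finset V) : Prop :=
  IsStrongAlliance G S ∧ (G.induce (S : Set V)).Connected

/-- `a_k(G)`: the number of strong defensive alliances of cardinality `k` in `G`
whose induced subgraph is connected. -/
noncomputable def aCoeff {V : Type*} (G : SimpleGraph V) (k : ℕ) : ℕ :=
  {S : Finset V | S.card = k ∧ IsCountedAlliance G S}.ncard

/-- The strong alliance polynomial `a(G;x) = Σ_k a_k(G) x^k`. -/
noncomputable def alliancePoly {V : Type*} [Fintype V] (G : SimpleGraph V) : Polynomial ℤ :=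
  ∑ k ∈ Finset.range (Fintype.card V + 1), Polynomial.C (aCoeff G k : ℤ) * Polynomial.X ^ k

section helpers

open Sum

variable {n m : ℕ}

private def inlEmb (n m : ℕ) : Fin n ↪ Fin n ⊕ Fin m := ⟨Sum.inl, Sum.inl_injective⟩
private def inrEmb (n m : ℕ) : Fin m ↪ Fin n ⊕ Fin m := ⟨Sum.inr, Sum.inr_injective⟩

private lemma filter_isLeft_card (S : Finset (Fin n ⊕ Fin m)) :
    (S.filter (fun x => x.isLeft)).card = S.toLeft.card := by
  rw [show S.filter (fun x => x.isLeft) = S.toLeft.map (inlEmb n m) by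
    ext x; cases x <;> simp [inlEmb], card_map]

private lemma filter_isRight_card (S : Finset (Fin n ⊕ Fin m)) :
    (S.filter (fun x => x.isRight)).card = S.toRight.card := by
  rw [show S.filter (fun x => x.isRight) = S.toRight.map (inrEmb n m) by
    ext x; cases x <;> simp [inrEmb], card_map]

private lemma degIn_inl (S : Finset (Fin n ⊕ Fin m)) (a : Fin n) :
    degIn (completeBipartiteGraph (Fin n) (Fin m)) S (inl a) = S.toRight.card := by
  have h : ((S : Set (Fin n ⊕ Fin m)) ∩
      (completeBipartiteGraph (Fin n) (Fin m)).neighborSet (inl a))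
      = ↑(S.toRight.map (inrEmb n m)) := by
    ext x; cases x <;> simp [inrEmb, mem_neighborSet]
  rw [degIn, h, Set.ncard_coe_finset, card_map]

private lemma degIn_inr (S : Finset (Fin n ⊕ Fin m)) (b : Fin m) :
    degIn (completeBipartiteGraph (Fin n) (Fin m)) S (inr b) = S.toLeft.card := by
  have h : ((S : Set (Fin n ⊕ Fin m)) ∩
      (completeBipartiteGraph (Fin n) (Fin m)).neighborSet (inr b))
      = ↑(S.toLeft.map (inlEmb n m)) := by
    ext x; cases x <;> simp [inlEmb, mem_neighborSet]
  rw [degIn, h, Set.ncard_coe_finset, card_map]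

private lemma degOf_inl (a : Fin n) :
    degOf (completeBipartiteGraph (Fin n) (Fin m)) (inl a) = m := by
  have h : (completeBipartiteGraph (Fin n) (Fin m)).neighborSet (inl a)
      = ↑((univ : Finset (Fin m)).map (inrEmb n m)) := by
    ext x; cases x <;> simp [inrEmb, mem_neighborSet]
  rw [degOf, h, Set.ncard_coe_finset, card_map, card_univ, Fintype.card_fin]

private lemma degOf_inr (b : Fin m) :
    degOf (completeBipartiteGraph (Fin n) (Fin m)) (inr b) = n := by
  have h : (completeBipartiteGraph (Fin n) (Fin m)).neighborSet (inr b)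
      = ↑((univ : Finset (Fin n)).map (inlEmb n m)) := by
    ext x; cases x <;> simp [inlEmb, mem_neighborSet]
  rw [degOf, h, Set.ncard_coe_finset, card_map, card_univ, Fintype.card_fin]

private lemma bip_connected (S : Finset (Fin n ⊕ Fin m)) (hl : S.toLeft.Nonempty)
    (hr : S.toRight.Nonempty) :
    ((completeBipartiteGraph (Fin n) (Fin m)).induce (S : Set (Fin n ⊕ Fin m))).Connected := by
  obtain ⟨a, ha⟩ := hl
  obtain ⟨b, hb⟩ := hr
  rw [Finset.mem_toLeft] at ha
  rw [Finset.mem_toRight] at hb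
  have ha' : inl a ∈ (S : Set (Fin n ⊕ Fin m)) := Finset.mem_coe.mpr ha
  have hb' : inr b ∈ (S : Set (Fin n ⊕ Fin m)) := Finset.mem_coe.mpr hb
  rw [SimpleGraph.connected_iff]
  refine ⟨?_, ⟨⟨inr b, hb'⟩⟩⟩
  have key : ∀ w : (S : Set (Fin n ⊕ Fin m)),
      ((completeBipartiteGraph (Fin n) (Fin m)).induce
        (S : Set (Fin n ⊕ Fin m))).Reachable w ⟨inr b, hb'⟩ := by
    rintro ⟨(c | c), hc⟩
    · exact SimpleGraph.Adj.reachable (by simp [Function.Embedding.subtype]; exact Or.inl ⟨rfl, rfl⟩)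
    · exact (SimpleGraph.Adj.reachable (v := ⟨inl a, ha'⟩)
          (by simp [Function.Embedding.subtype]; exact Or.inr ⟨rfl, rfl⟩)).trans
        (SimpleGraph.Adj.reachable (by simp [Function.Embedding.subtype]; exact Or.inl ⟨rfl, rfl⟩))
  exact fun u v => (key u).trans (key v).symm

/-- The key characterization. -/
private lemma char (hn : 1 ≤ n) (hm : 1 ≤ m) (S : Finset (Fin n ⊕ Fin m)) :
    IsCountedAlliance (completeBipartiteGraph (Fin n) (Fin m)) S ↔
      (n + 1) / 2 ≤ S.toLeft.card ∧ (m + 1) / 2 ≤ S.toRight.card := by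
  constructor
  · rintro ⟨⟨hne, hall⟩, -⟩
    have hLR : S.toLeft.Nonempty ∨ S.toRight.Nonempty := by
      obtain ⟨v, hv⟩ := hne
      cases v with
      | inl a => exact Or.inl ⟨a, Finset.mem_toLeft.mpr hv⟩
      | inr b => exact Or.inr ⟨b, Finset.mem_toRight.mpr hv⟩
    have hboth : S.toLeft.Nonempty ∧ S.toRight.Nonempty := by
      rcases hLR with ⟨a, ha⟩ | ⟨b, hb⟩
      · have h1 := hall (inl a) (Finset.mem_toLeft.mp ha)
        rw [degOf_inl, degIn_inl] at h1
        exact ⟨⟨a, ha⟩, Finset.card_pos.mp (by omega)⟩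
      · have h1 := hall (inr b) (Finset.mem_toRight.mp hb)
        rw [degOf_inr, degIn_inr] at h1
        exact ⟨Finset.card_pos.mp (by omega), ⟨b, hb⟩⟩
    obtain ⟨⟨a, ha⟩, ⟨b, hb⟩⟩ := hboth
    have h1 := hall (inl a) (Finset.mem_toLeft.mp ha)
    rw [degOf_inl, degIn_inl] at h1
    have h2 := hall (inr b) (Finset.mem_toRight.mp hb)
    rw [degOf_inr, degIn_inr] at h2
    omega
  · rintro ⟨h1, h2⟩
    have hl : S.toLeft.Nonempty := Finset.card_pos.mp (by omega)
    have hr : S.toRight.Nonempty := Finset.card_pos.mp (by omega)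
    refine ⟨⟨?_, ?_⟩, bip_connected S hl hr⟩
    · obtain ⟨a, ha⟩ := hl
      exact ⟨inl a, Finset.mem_toLeft.mp ha⟩
    · intro v hv
      cases v with
      | inl a => rw [degOf_inl, degIn_inl]; omega
      | inr b => rw [degOf_inr, degIn_inr]; omega

/-- The counting formula. -/
private lemma count (hn : 1 ≤ n) (hm : 1 ≤ m) (k : ℕ) :
    aCoeff (completeBipartiteGraph (Fin n) (Fin m)) k =
      ∑ i ∈ Finset.Icc ((m + 1) / 2) (k - (n + 1) / 2), m.choose i * n.choose (k - i) := by
  classical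
  set cn := (n + 1) / 2 with hcn
  set cm := (m + 1) / 2 with hcm
  have hcn1 : 1 ≤ cn := by omega
  have hcm1 : 1 ≤ cm := by omega
  have hset : {S : Finset (Fin n ⊕ Fin m) | S.card = k ∧
      IsCountedAlliance (completeBipartiteGraph (Fin n) (Fin m)) S}
      = ↑((univ : Finset (Finset (Fin n ⊕ Fin m))).filter
          (fun S => S.card = k ∧ cn ≤ S.toLeft.card ∧ cm ≤ S.toRight.card)) := by
    ext S
    simp only [Set.mem_setOf_eq, coe_filter, mem_univ, true_and]
    exact and_congr_right fun _ => char hn hm S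
  rw [aCoeff, hset, Set.ncard_coe_finset]
  rw [Finset.card_bij' (fun S _ => (⟨S.toRight.card, (S.toRight, S.toLeft)⟩ :
        (i : ℕ) × (Finset (Fin m) × Finset (Fin n))))
      (fun p _ => p.2.2.disjSum p.2.1)
      (t := (Finset.Icc cm (k - cn)).sigma
        (fun i => Finset.powersetCard i (univ : Finset (Fin m)) ×ˢ
          Finset.powersetCard (k - i) (univ : Finset (Fin n))))
      ?_ ?_ ?_ ?_]
  · rw [Finset.card_sigma]
    refine Finset.sum_congr rfl fun i _ => ?_
    rw [Finset.card_product, Finset.card_powersetCard, Finset.card_powersetCard,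
      card_univ, card_univ, Fintype.card_fin, Fintype.card_fin]
  · intro S hS
    simp only [mem_filter, mem_univ, true_and] at hS
    obtain ⟨hk, h1, h2⟩ := hS
    have hsum := Finset.card_toLeft_add_card_toRight (u := S)
    simp only [Finset.mem_sigma, Finset.mem_Icc, Finset.mem_product,
      Finset.mem_powersetCard_univ]
    exact ⟨⟨h2, by omega⟩, by simp, by omega⟩
  · intro p hp
    simp only [Finset.mem_sigma, Finset.mem_Icc, Finset.mem_product,
      Finset.mem_powersetCard_univ] at hp
    obtain ⟨⟨hi1, hi2⟩, hB, hA⟩ := hp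
    simp only [mem_filter, mem_univ, true_and, Finset.toLeft_disjSum, Finset.toRight_disjSum,
      Finset.card_disjSum]
    refine ⟨by omega, by omega, by omega⟩
  · intro S hS
    simp only [Finset.toLeft_disjSum_toRight]
  · rintro ⟨i, B, A⟩ hp
    simp only [Finset.mem_sigma, Finset.mem_Icc, Finset.mem_product,
      Finset.mem_powersetCard_univ] at hp
    obtain ⟨⟨hi1, hi2⟩, hB, hA⟩ := hp
    simp only [Finset.toLeft_disjSum, Finset.toRight_disjSum]
    exact Sigma.ext (by simpa using hB) (by simp)

/-- Coefficient of one factor. -/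
private lemma factor_coeff (c N : ℕ) (hcN : ∀ i, N < i → N.choose i = 0) (d : ℕ) :
    (∑ i ∈ Finset.Icc c N, Polynomial.C ((N.choose i : ℕ) : ℤ) * Polynomial.X ^ i).coeff d
      = if c ≤ d then ((N.choose d : ℕ) : ℤ) else 0 := by
  rw [Polynomial.finset_sum_coeff]
  simp only [Polynomial.coeff_C_mul, Polynomial.coeff_X_pow, mul_ite, mul_one, mul_zero]
  rw [Finset.sum_ite_eq (Finset.Icc c N) d (fun i => ((N.choose i : ℕ) : ℤ))]
  by_cases h1 : c ≤ d
  · by_cases h2 : d ≤ N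
    · simp [Finset.mem_Icc, h1, h2]
    · simp only [Finset.mem_Icc, h1, true_and, h2, if_false, if_true]
      rw [hcN d (by omega)]
      simp
  · simp [Finset.mem_Icc, h1]

end helpers

theorem stmt_12 (n m : ℕ) (hn : 1 ≤ n) (hm : 1 ≤ m) :
    (∀ S : Finset (Fin n ⊕ Fin m), S.Nonempty →
      (IsCountedAlliance (completeBipartiteGraph (Fin n) (Fin m)) S ↔
        (n + 1) / 2 ≤ (S.filter (fun x => x.isLeft)).card ∧
          (m + 1) / 2 ≤ (S.filter (fun x => x.isRight)).card)) ∧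
    (∀ k : ℕ, aCoeff (completeBipartiteGraph (Fin n) (Fin m)) k =
      ∑ i ∈ Finset.Icc ((m + 1) / 2) (k - (n + 1) / 2), m.choose i * n.choose (k - i)) ∧
    alliancePoly (completeBipartiteGraph (Fin n) (Fin m)) =
      (∑ i ∈ Finset.Icc ((n + 1) / 2) n, Polynomial.C ((n.choose i : ℕ) : ℤ)
          * Polynomial.X ^ i) *
      (∑ j ∈ Finset.Icc ((m + 1) / 2) m, Polynomial.C ((m.choose j : ℕ) : ℤ)
          * Polynomial.X ^ j) := by
  set cn := (n + 1) / 2 with hcn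
  set cm := (m + 1) / 2 with hcm
  have hcn1 : 1 ≤ cn := by omega
  have hcm1 : 1 ≤ cm := by omega
  refine ⟨?_, count hn hm, ?_⟩
  · intro S _
    rw [filter_isLeft_card, filter_isRight_card]
    exact char hn hm S
  · -- polynomial identity
    -- abbreviate A k for the ℕ sum
    set A : ℕ → ℕ := fun k => ∑ i ∈ Finset.Icc cm (k - cn), m.choose i * n.choose (k - i)
      with hA
    have hAzero : ∀ k, n + m < k → A k = 0 := by
      intro k hk
      refine Finset.sum_eq_zero fun j hj => ?_
      simp only [Finset.mem_Icc] at hj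
      by_cases hjm : j ≤ m
      · have : n < k - j := by omega
        rw [Nat.choose_eq_zero_of_lt this, mul_zero]
      · rw [Nat.choose_eq_zero_of_lt (by omega), zero_mul]
    ext k
    -- LHS coefficient
    have hcard : Fintype.card (Fin n ⊕ Fin m) = n + m := by
      simp [Fintype.card_sum]
    have hLHS : (alliancePoly (completeBipartiteGraph (Fin n) (Fin m))).coeff k
        = ((A k : ℕ) : ℤ) := by
      rw [alliancePoly, Polynomial.finset_sum_coeff]
      simp only [Polynomial.coeff_C_mul, Polynomial.coeff_X_pow, mul_ite, mul_one, mul_zero]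
      rw [Finset.sum_ite_eq (Finset.range (Fintype.card (Fin n ⊕ Fin m) + 1)) k
        (fun k' => ((aCoeff (completeBipartiteGraph (Fin n) (Fin m)) k' : ℕ) : ℤ))]
      by_cases hk : k ∈ Finset.range (Fintype.card (Fin n ⊕ Fin m) + 1)
      · rw [if_pos hk, count hn hm k]
      · rw [if_neg hk]
        rw [Finset.mem_range, hcard] at hk
        rw [hAzero k (by omega)]
        simp
    rw [hLHS, Polynomial.coeff_mul]
    rw [Finset.Nat.sum_antidiagonal_eq_sum_range_succ_mk]
    have hfac1 := factor_coeff cn n (fun i hi => Nat.choose_eq_zero_of_lt hi)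
    have hfac2 := factor_coeff cm m (fun i hi => Nat.choose_eq_zero_of_lt hi)
    simp only [hfac1, hfac2]
    -- now show ((A k : ℕ) : ℤ) = ∑ i ∈ range (k+1), (if cn ≤ i then ↑(n.choose i) else 0) *
    --   (if cm ≤ k - i then ↑(m.choose (k - i)) else 0)
    rw [← Finset.sum_range_reflect
      (fun i => (if cn ≤ i then ((n.choose i : ℕ) : ℤ) else 0) *
        (if cm ≤ k - i then ((m.choose (k - i) : ℕ) : ℤ) else 0)) (k + 1)]
    simp only [Nat.add_sub_cancel]
    have hIcc : Finset.Icc cm (k - cn)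
        = (Finset.range (k + 1)).filter (fun j => cm ≤ j ∧ j ≤ k - cn) := by
      ext j
      simp only [Finset.mem_Icc, Finset.mem_filter, Finset.mem_range, Nat.lt_succ_iff]
      omega
    rw [hA]
    push_cast [hIcc, Finset.sum_filter]
    refine Finset.sum_congr rfl fun j hj => ?_
    simp only [Finset.mem_range, Nat.lt_succ_iff] at hj
    have hjj : k - (k - j) = j := by omega
    rw [hjj]
    have hiff : (cm ≤ j ∧ j ≤ k - cn) ↔ (cn ≤ k - j ∧ cm ≤ j) := by omega
    by_cases hc : cm ≤ j ∧ j ≤ k - cn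
    · rw [if_pos hc, if_pos (hiff.mp hc).1, if_pos (hiff.mp hc).2]
      ring
    · rw [if_neg hc]
      by_cases h1 : cn ≤ k - j
      · rw [if_pos h1, if_neg (fun h2 => hc (hiff.mpr ⟨h1, h2⟩)), mul_zero]
      · rw [if_neg h1, zero_mul]
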